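/- For every t ≥ 0: B̃(b(t)) ≤ (1 + s_a)·B(t), where B̃ is the Young conjugate of B. -/

import Mathlib

/-- The Young conjugate `B̃(r) = sup_{ρ ≥ 0} (r·ρ − B(ρ))`, with values in the extended
reals so that no finiteness assumption is needed. -/
noncomputable def youngConjugate (B : ℝ → ℝ) (r : ℝ) : EReal :=
  ⨆ ρ : {ρ : ℝ // 0 ≤ ρ}, ((r * (ρ : ℝ) - B (ρ : ℝ) : ℝ) : EReal)

/-- inequality (2.2) of the paper, with explicit constant.
For every `t ≥ 0`: `B̃(b(t)) ≤ (1+s_a)·B(t)`. -/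
theorem stmt_7 (a a' : ℝ → ℝ) (iA sA : ℝ)
    (hiA : -1 < iA) (hias : iA ≤ sA)
    (ha_pos : ∀ t, 0 < t → 0 < a t)
    (ha_deriv : ∀ t, 0 < t → HasDerivAt a (a' t) t)
    (ha'_cont : ContinuousOn a' (Set.Ioi 0))
    (hbound : ∀ t, 0 < t → iA ≤ t * a' t / a t ∧ t * a' t / a t ≤ sA)
    (b : ℝ → ℝ) (hb0 : b 0 = 0) (hb : ∀ t, 0 < t → b t = a t * t)
    (B : ℝ → ℝ) (hB : ∀ t, B t = ∫ τ in (0:ℝ)..t, b τ) :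
    ∀ t, 0 ≤ t → youngConjugate B (b t) ≤ (((1 + sA) * B t : ℝ) : EReal) := by
  -- basic facts about b
  have hb_nonneg : ∀ τ, 0 ≤ τ → 0 ≤ b τ := by
    intro τ hτ
    rcases hτ.eq_or_lt with h | h
    · rw [← h, hb0]
    · rw [hb τ h]; exact mul_nonneg (ha_pos τ h).le hτ
  have hb_deriv : ∀ τ, 0 < τ → HasDerivAt b (a τ + τ * a' τ) τ := by
    intro τ hτ
    have h1 : HasDerivAt (fun s => a s * s) (a' τ * τ + a τ * 1) τ :=
      (ha_deriv τ hτ).mul (hasDerivAt_id τ)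
    have h2 : b =ᶠ[nhds τ] fun s => a s * s := by
      filter_upwards [Ioi_mem_nhds hτ] with s hs
      exact hb s hs
    have := h1.congr_of_eventuallyEq h2
    exact this.congr_deriv (by ring)
  have hderiv_pos : ∀ τ, 0 < τ → 0 < a τ + τ * a' τ := by
    intro τ hτ
    have h1 := (hbound τ hτ).1
    have haτ := ha_pos τ hτ
    have h2 : iA * a τ ≤ τ * a' τ := by
      rw [le_div_iff₀ haτ] at h1; linarith
    nlinarith
  have hb_cont : ContinuousOn b (Set.Ioi 0) :=
    fun τ hτ => ((hb_deriv τ hτ).continuousAt).continuousWithinAt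
  -- monotonicity of b on [0, x]
  have hb_smono : StrictMonoOn b (Set.Ioi 0) := by
    apply strictMonoOn_of_deriv_pos (convex_Ioi 0) hb_cont
    intro τ hτ
    rw [interior_Ioi] at hτ
    rw [(hb_deriv τ hτ).deriv]
    exact hderiv_pos τ hτ
  have hb_mono : ∀ x, MonotoneOn b (Set.Icc 0 x) := by
    intro x u hu v hv huv
    rcases hu.1.eq_or_lt with h | h
    · rw [← h, hb0]; exact hb_nonneg v hv.1
    · exact hb_smono.monotoneOn (Set.mem_Ioi.mpr h) (Set.mem_Ioi.mpr (h.trans_le huv)) huv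
  -- integrability of b on subintervals of [0, ∞)
  have hb_intble : ∀ u v : ℝ, 0 ≤ u → 0 ≤ v → IntervalIntegrable b MeasureTheory.volume u v := by
    intro u v hu hv
    apply MonotoneOn.intervalIntegrable
    apply (hb_mono (max u v)).mono
    intro x hx
    rcases Set.mem_uIcc.mp hx with ⟨h1, h2⟩ | ⟨h1, h2⟩
    · exact ⟨hu.trans h1, h2.trans (le_max_right u v)⟩
    · exact ⟨hv.trans h1, h2.trans (le_max_left u v)⟩
  have hB_nonneg : ∀ x, 0 ≤ x → 0 ≤ B x := by
    intro x hx
    rw [hB]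
    exact intervalIntegral.integral_nonneg hx fun u hu => hb_nonneg u hu.1
  intro t ht
  rcases ht.eq_or_lt with h0 | h0
  · -- t = 0
    subst h0
    apply iSup_le
    rintro ⟨ρ, hρ⟩
    rw [EReal.coe_le_coe_iff]
    have hBt : B 0 = 0 := by rw [hB]; simp
    have := hB_nonneg ρ hρ
    rw [hb0, hBt]
    nlinarith
  -- t > 0 from now on
  have hbt_pos : 0 < b t := by rw [hb t h0]; exact mul_pos (ha_pos t h0) h0
  -- key 1 : the supremum is attained at ρ = t
  have key1 : ∀ ρ, 0 ≤ ρ → b t * ρ - B ρ ≤ b t * t - B t := by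
    intro ρ hρ
    have hsub : B ρ - B t = ∫ τ in t..ρ, b τ := by
      rw [hB, hB]
      exact intervalIntegral.integral_interval_sub_left (hb_intble 0 ρ le_rfl hρ)
        (hb_intble 0 t le_rfl ht)
    have hgoal : b t * (ρ - t) ≤ B ρ - B t := by
      rw [hsub]
      rcases le_total t ρ with hle | hle
      · have : ∫ τ in t..ρ, b t ≤ ∫ τ in t..ρ, b τ := by
          apply intervalIntegral.integral_mono_on hle intervalIntegrable_const
            (hb_intble t ρ ht hρ)
          intro x hx
          exact hb_mono ρ ⟨ht, hle⟩ ⟨ht.trans hx.1, hx.2⟩ hx.1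
        rw [intervalIntegral.integral_const, smul_eq_mul] at this
        linarith [this]
      · have h2 : ∫ τ in ρ..t, b τ ≤ ∫ τ in ρ..t, b t := by
          apply intervalIntegral.integral_mono_on hle (hb_intble ρ t hρ ht)
            intervalIntegrable_const
          intro x hx
          exact hb_mono t ⟨hρ.trans hx.1, hx.2⟩ ⟨ht, le_rfl⟩ hx.2
        rw [intervalIntegral.integral_const, smul_eq_mul] at h2
        have hsym : (∫ τ in t..ρ, b τ) = -∫ τ in ρ..t, b τ :=
          intervalIntegral.integral_symm ρ t
        rw [hsym]
        linarith
    linarith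
  -- key 2 : t * b t ≤ (2 + sA) * B t
  have key2 : t * b t ≤ (2 + sA) * B t := by
    have hstep : ∀ ε, 0 < ε → ε < t → t * b t ≤ (2 + sA) * B t + ε * b t := by
      intro ε hε hεt
      set f' : ℝ → ℝ := fun τ => b τ + τ * (a τ + τ * a' τ) with hf'
      have huIcc : Set.uIcc ε t = Set.Icc ε t := Set.uIcc_of_le hεt.le
      have hd : ∀ x ∈ Set.uIcc ε t, HasDerivAt (fun τ => τ * b τ) (f' x) x := by
        intro x hx
        rw [huIcc] at hx
        have hx0 : 0 < x := hε.trans_le hx.1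
        have := (hasDerivAt_id x).mul (hb_deriv x hx0)
        refine this.congr_deriv ?_
        simp only [hf', id]
        ring
      have hcont : ContinuousOn f' (Set.Icc ε t) := by
        have hsub : Set.Icc ε t ⊆ Set.Ioi 0 := fun x hx => hε.trans_le hx.1
        have hca : ContinuousOn a (Set.Ioi 0) :=
          fun τ hτ => ((ha_deriv τ hτ).continuousAt).continuousWithinAt
        exact ((hb_cont.mono hsub).add ((continuousOn_id.mono hsub).mul
          ((hca.mono hsub).add ((continuousOn_id.mono hsub).mul (ha'_cont.mono hsub)))))
      have hint : IntervalIntegrable f' MeasureTheory.volume ε t := by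
        rw [intervalIntegrable_iff_integrableOn_Icc_of_le hεt.le]
        exact hcont.integrableOn_compact isCompact_Icc
      have hftc : ∫ τ in ε..t, f' τ = t * b t - ε * b ε :=
        intervalIntegral.integral_eq_sub_of_hasDerivAt hd hint
      have hptwise : ∀ x ∈ Set.Icc ε t, f' x ≤ (2 + sA) * b x := by
        intro x hx
        have hx0 : 0 < x := hε.trans_le hx.1
        have h2 := (hbound x hx0).2
        have hax := ha_pos x hx0
        have h3 : x * a' x ≤ sA * a x := by
          rw [div_le_iff₀ hax] at h2; linarith
        have hbx : b x = a x * x := hb x hx0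
        simp only [hf']
        nlinarith [hx0.le]
      have hmono : ∫ τ in ε..t, f' τ ≤ ∫ τ in ε..t, (2 + sA) * b τ := by
        apply intervalIntegral.integral_mono_on hεt.le hint
          (((hb_intble ε t hε.le ht).const_mul (2 + sA))) hptwise
      have hBsub : (∫ τ in ε..t, b τ) = B t - B ε := by
        rw [hB, hB]
        exact (intervalIntegral.integral_interval_sub_left (hb_intble 0 t le_rfl ht)
          (hb_intble 0 ε le_rfl hε.le)).symm
      rw [hftc] at hmono
      rw [intervalIntegral.integral_const_mul, hBsub] at hmono
      have hBε : 0 ≤ B ε := hB_nonneg ε hε.le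
      have hsA : 0 < 2 + sA := by linarith
      have hbε : b ε ≤ b t := hb_mono t ⟨hε.le, hεt.le⟩ ⟨ht, le_rfl⟩ hεt.le
      have hbε0 : 0 ≤ b ε := hb_nonneg ε hε.le
      nlinarith
    by_contra hcon
    push_neg at hcon
    set d := t * b t - (2 + sA) * B t with hd
    have hdpos : 0 < d := by simp [hd]; linarith
    set ε := min (t / 2) (d / (2 * b t)) with hε
    have hε0 : 0 < ε := lt_min (by linarith) (by positivity)
    have hεt : ε < t := (min_le_left _ _).trans_lt (by linarith)
    have := hstep ε hε0 hεt
    have hεd : ε * b t ≤ d / 2 := by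
      have : ε ≤ d / (2 * b t) := min_le_right _ _
      rw [le_div_iff₀ (by positivity)] at this
      linarith
    linarith
  -- conclusion
  apply iSup_le
  rintro ⟨ρ, hρ⟩
  rw [EReal.coe_le_coe_iff]
  have h1 := key1 ρ hρ
  linarith
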